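/- Let n ≥ 1 and let Φ ⊆ D_n = {±e_i ± e_j : i ≠ j} be a root subsystem. Then there exist a sign function ε : {1,…,n} → {1,−1}, a partition P of {1,…,n}, and a type assignment t from P to {A, D}, such that D_ε(Φ) = ⋃_{B∈P} Φ_{t(B)}(B), where D_ε is the linear automorphism of ℝ^n with D_ε(e_i) = ε(i)·e_i. -/

import Mathlib

open Finset

noncomputable section

/-- Standard basis vector `e i` of `ℝ^n`. -/
def E {n : ℕ} (i : Fin n) : Fin n → ℝ := Pi.single i 1

/-- Standard inner product on `ℝ^n`. -/
def dot {n : ℕ} (v w : Fin n → ℝ) : ℝ := ∑ i, v i * w i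

/-- Reflection across the hyperplane orthogonal to `α`. -/
def reflRoot {n : ℕ} (α v : Fin n → ℝ) : Fin n → ℝ := v - (2 * dot v α / dot α α) • α

/-- The root system `A_{n-1}`. -/
def Aset (n : ℕ) : Set (Fin n → ℝ) := {α | ∃ i j : Fin n, i ≠ j ∧ α = E i - E j}

/-- The root system `D_n`. -/
def Dset (n : ℕ) : Set (Fin n → ℝ) :=
  {α | ∃ i j : Fin n, i ≠ j ∧ (α = E i - E j ∨ α = E i + E j ∨ α = -(E i + E j))}

/-- The root system `B_n`. -/
def Bset (n : ℕ) : Set (Fin n → ℝ) := Dset n ∪ {α | ∃ i : Fin n, α = E i ∨ α = -E i}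

/-- The root system `C_n`. -/
def Cset (n : ℕ) : Set (Fin n → ℝ) :=
  Dset n ∪ {α | ∃ i : Fin n, α = (2:ℝ) • E i ∨ α = -((2:ℝ) • E i)}

/-- The nonreduced root system `BC_n`. -/
def BCset (n : ℕ) : Set (Fin n → ℝ) := Bset n ∪ Cset n

/-- Types of classical irreducible root (sub)systems. -/
inductive RType | A | D | B | C | BC
deriving DecidableEq

/-- Type-`A` system on a block `B`. -/
def PhiA {n : ℕ} (B : Finset (Fin n)) : Set (Fin n → ℝ) :=
  {α | ∃ i ∈ B, ∃ j ∈ B, i ≠ j ∧ α = E i - E j}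

/-- Type-`D` system on a block `B`. -/
def PhiD {n : ℕ} (B : Finset (Fin n)) : Set (Fin n → ℝ) :=
  {α | ∃ i ∈ B, ∃ j ∈ B, i ≠ j ∧ (α = E i - E j ∨ α = E i + E j ∨ α = -(E i + E j))}

/-- Type-`B` system on a block `B`. -/
def PhiB {n : ℕ} (B : Finset (Fin n)) : Set (Fin n → ℝ) :=
  PhiD B ∪ {α | ∃ i ∈ B, α = E i ∨ α = -E i}

/-- Type-`C` system on a block `B`. -/
def PhiC {n : ℕ} (B : Finset (Fin n)) : Set (Fin n → ℝ) :=
  PhiD B ∪ {α | ∃ i ∈ B, α = (2:ℝ) • E i ∨ α = -((2:ℝ) • E i)}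

/-- Type-`BC` system on a block `B`. -/
def PhiBC {n : ℕ} (B : Finset (Fin n)) : Set (Fin n → ℝ) := PhiB B ∪ PhiC B

/-- The classical system of the given type on a block. -/
def PhiOf {n : ℕ} : RType → Finset (Fin n) → Set (Fin n → ℝ)
  | RType.A => PhiA
  | RType.D => PhiD
  | RType.B => PhiB
  | RType.C => PhiC
  | RType.BC => PhiBC

namespace Cor45
variable {n : ℕ}
def rt (a : ℝ) (i : Fin n) (b : ℝ) (j : Fin n) : Fin n → ℝ := a • E i + b • E j

lemma rt_apply (a : ℝ) (i : Fin n) (b : ℝ) (j : Fin n) (k : Fin n) :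
    rt a i b j k = a * (if i = k then 1 else 0) + b * (if j = k then 1 else 0) := by
  simp [rt, E, Pi.single_apply, eq_comm]

lemma rt_comm (a : ℝ) (i : Fin n) (b : ℝ) (j : Fin n) : rt a i b j = rt b j a i := by
  funext m; simp only [rt_apply]; ring

lemma rt_neg (a : ℝ) (i : Fin n) (b : ℝ) (j : Fin n) : rt (-a) i (-b) j = -(rt a i b j) := by
  funext m; simp only [rt_apply, Pi.neg_apply]; ring

lemma dot_rt (v : Fin n → ℝ) (c : ℝ) (k : Fin n) (d : ℝ) (l : Fin n) :
    dot v (rt c k d l) = c * v k + d * v l := by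
  simp only [dot, rt_apply, mul_add]
  rw [Finset.sum_add_distrib]
  congr 1
  · rw [Finset.sum_eq_single k] <;> simp +contextual [eq_comm, mul_comm]
  · rw [Finset.sum_eq_single l] <;> simp +contextual [eq_comm, mul_comm]

lemma refl_rt (a : ℝ) (i : Fin n) (b : ℝ) (j : Fin n)
    (ha : a = 1 ∨ a = -1) (hb : b = 1 ∨ b = -1) (hij : i ≠ j) (v : Fin n → ℝ) :
    reflRoot (rt a i b j) v = v - (a * v i + b * v j) • rt a i b j := by
  have h2 : dot (rt a i b j) (rt a i b j) = 2 := by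
    rw [dot_rt, rt_apply, rt_apply]
    rcases ha with rfl | rfl <;> rcases hb with rfl | rfl <;>
      simp [hij, hij.symm, if_neg] <;> norm_num
  rw [reflRoot, h2, dot_rt]
  congr 1
  ring

end Cor45

namespace Cor45
variable {n : ℕ} {Φ : Set (Fin n → ℝ)}

def U (a : ℝ) : Prop := a = 1 ∨ a = -1

lemma U.mul {a b : ℝ} (ha : U a) (hb : U b) : U (a*b) := by
  rcases ha with rfl|rfl <;> rcases hb with rfl|rfl <;> simp [U]

lemma U.neg {a : ℝ} (ha : U a) : U (-a) := by
  rcases ha with rfl|rfl <;> simp [U]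

lemma U.one : U (1:ℝ) := Or.inl rfl
lemma U.negone : U (-1:ℝ) := Or.inr rfl

lemma neg_mem (hcl : ∀ α ∈ Φ, ∀ β ∈ Φ, reflRoot α β ∈ Φ)
    {a b : ℝ} {i j : Fin n} (ha : U a) (hb : U b) (hij : i ≠ j)
    (h : rt a i b j ∈ Φ) : rt (-a) i (-b) j ∈ Φ := by
  have := hcl _ h _ h
  rw [refl_rt a i b j ha hb hij] at this
  convert this using 1
  rw [rt_apply, rt_apply, rt_neg]
  have e1 : (if i = i then (1:ℝ) else 0) = 1 := by simp
  have e2 : (if j = i then (1:ℝ) else 0) = 0 := by simp [hij.symm]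
  have e3 : (if i = j then (1:ℝ) else 0) = 0 := by simp [hij]
  have e4 : (if j = j then (1:ℝ) else 0) = 1 := by simp
  rw [e1, e2, e3, e4]
  funext m
  simp only [Pi.neg_apply, Pi.sub_apply, Pi.smul_apply, smul_eq_mul, rt_apply]
  rcases ha with rfl|rfl <;> rcases hb with rfl|rfl <;> ring

lemma C1 (hcl : ∀ α ∈ Φ, ∀ β ∈ Φ, reflRoot α β ∈ Φ)
    {a b c d : ℝ} {i j k : Fin n} (ha : U a) (hb : U b) (hc : U c) (hd : U d)
    (hij : i ≠ j) (hjk : j ≠ k) (hik : i ≠ k)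
    (h1 : rt a i b j ∈ Φ) (h2 : rt c j d k ∈ Φ) :
    rt (-(a*b*c)) i d k ∈ Φ := by
  have := hcl _ h1 _ h2
  rw [refl_rt a i b j ha hb hij] at this
  convert this using 1
  have e1 : rt c j d k i = 0 := by
    rw [rt_apply]; simp [hij.symm, hik.symm]
  have e2 : rt c j d k j = c := by
    rw [rt_apply]; simp [hjk.symm]
  rw [e1, e2]
  funext m
  simp only [Pi.sub_apply, Pi.smul_apply, smul_eq_mul, rt_apply]
  rcases hb with rfl|rfl <;> ring

end Cor45

namespace Cor45
variable {n : ℕ} {Φ : Set (Fin n → ℝ)}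

def Edge (Φ : Set (Fin n → ℝ)) (i j : Fin n) : Prop :=
  i ≠ j ∧ ∃ a b : ℝ, U a ∧ U b ∧ rt a i b j ∈ Φ

def Con (Φ : Set (Fin n → ℝ)) (i j : Fin n) : Prop := i = j ∨ Edge Φ i j

lemma Edge.symm {i j : Fin n} (h : Edge Φ i j) : Edge Φ j i := by
  obtain ⟨hij, a, b, ha, hb, hm⟩ := h
  exact ⟨hij.symm, b, a, hb, ha, by rwa [← rt_comm]⟩

lemma Con.refl (i : Fin n) : Con Φ i i := Or.inl rfl

lemma Con.symm {i j : Fin n} (h : Con Φ i j) : Con Φ j i := by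
  rcases h with rfl | h
  · exact Or.inl rfl
  · exact Or.inr h.symm

lemma Edge.trans (hcl : ∀ α ∈ Φ, ∀ β ∈ Φ, reflRoot α β ∈ Φ)
    {i j k : Fin n} (h1 : Edge Φ i j) (h2 : Edge Φ j k) : Con Φ i k := by
  by_cases hik : i = k
  · exact Or.inl hik
  obtain ⟨hij, a, b, ha, hb, hm1⟩ := h1
  obtain ⟨hjk, c, d, hc, hd, hm2⟩ := h2
  exact Or.inr ⟨hik, _, _, ((ha.mul hb).mul hc).neg, hd, C1 hcl ha hb hc hd hij hjk hik hm1 hm2⟩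

lemma Con.trans (hcl : ∀ α ∈ Φ, ∀ β ∈ Φ, reflRoot α β ∈ Φ)
    {i j k : Fin n} (h1 : Con Φ i j) (h2 : Con Φ j k) : Con Φ i k := by
  rcases h1 with rfl | h1
  · exact h2
  rcases h2 with rfl | h2
  · exact Or.inr h1
  · exact Edge.trans hcl h1 h2

/-- Both "sum-like" and "difference-like" roots on the pair. -/
def DPair (Φ : Set (Fin n → ℝ)) (p q : Fin n) : Prop :=
  rt 1 p 1 q ∈ Φ ∧ rt 1 p (-1) q ∈ Φ

lemma DPair.symm (hcl : ∀ α ∈ Φ, ∀ β ∈ Φ, reflRoot α β ∈ Φ) {p q : Fin n}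
    (hpq : p ≠ q) (h : DPair Φ p q) : DPair Φ q p := by
  refine ⟨by rw [rt_comm]; exact h.1, ?_⟩
  have := neg_mem hcl U.one U.negone hpq h.2
  rw [rt_comm] at this
  simpa using this

lemma DPair.all (hcl : ∀ α ∈ Φ, ∀ β ∈ Φ, reflRoot α β ∈ Φ) {p q : Fin n}
    (hpq : p ≠ q) (h : DPair Φ p q) {c d : ℝ} (hc : U c) (hd : U d) :
    rt c p d q ∈ Φ := by
  rcases hc with rfl | rfl <;> rcases hd with rfl | rfl
  · exact h.1
  · exact h.2
  · have := neg_mem hcl U.one U.negone hpq h.2; simpa using this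
  · have := neg_mem hcl U.one U.one hpq h.1; exact this

lemma DPair.spread (hcl : ∀ α ∈ Φ, ∀ β ∈ Φ, reflRoot α β ∈ Φ) {p q x : Fin n}
    (hpq : p ≠ q) (hD : DPair Φ p q) {a b : ℝ} (ha : U a) (hb : U b)
    (hxp : x ≠ p) (hxq : x ≠ q) (h : rt a x b p ∈ Φ) :
    DPair Φ x q ∧ DPair Φ x p := by
  have key : ∀ d : ℝ, U d → rt 1 x d q ∈ Φ := by
    intro d hd
    have hc : U (-(a*b)) := (ha.mul hb).neg
    have := C1 hcl ha hb hc hd hxp hpq hxq h (hD.all hcl hpq hc hd)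
    have e : -(a * b * -(a*b)) = 1 := by
      rcases ha with rfl|rfl <;> rcases hb with rfl|rfl <;> norm_num
    rwa [e] at this
  have hxq' : DPair Φ x q := ⟨key 1 U.one, key (-1) U.negone⟩
  refine ⟨hxq', ?_⟩
  have hqp := hD.symm hcl hpq
  have key2 : ∀ e : ℝ, U e → rt 1 x e p ∈ Φ := by
    intro e he
    have := C1 hcl U.one U.one U.negone he hxq hpq.symm hxp (key 1 U.one)
      (hqp.all hcl hpq.symm U.negone he)
    norm_num at this
    exact this
  exact ⟨key2 1 U.one, key2 (-1) U.negone⟩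

lemma DPair.toD (hcl : ∀ α ∈ Φ, ∀ β ∈ Φ, reflRoot α β ∈ Φ) {p q x : Fin n}
    (hpq : p ≠ q) (hD : DPair Φ p q) (hx : Con Φ p x) (hxp : x ≠ p) :
    DPair Φ x p := by
  by_cases hxq : x = q
  · subst hxq; exact hD.symm hcl hpq
  rcases hx with h | h
  · exact absurd h.symm hxp
  obtain ⟨_, a, b, ha, hb, hm⟩ := h
  rw [rt_comm] at hm
  exact (DPair.spread hcl hpq hD hb ha hxp hxq hm).2

lemma DPair.full (hcl : ∀ α ∈ Φ, ∀ β ∈ Φ, reflRoot α β ∈ Φ) {p q x y : Fin n}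
    (hpq : p ≠ q) (hD : DPair Φ p q) (hx : Con Φ p x) (hy : Con Φ p y)
    (hxy : x ≠ y) {c d : ℝ} (hc : U c) (hd : U d) : rt c x d y ∈ Φ := by
  by_cases hxp : x = p
  · subst hxp
    have := (DPair.toD hcl hpq hD hy (Ne.symm hxy)).symm hcl (Ne.symm hxy)
    exact this.all hcl hxy hc hd
  by_cases hyp : y = p
  · subst hyp
    exact (DPair.toD hcl hpq hD hx hxy) |>.all hcl hxy hc hd
  · have hXp := DPair.toD hcl hpq hD hx hxp
    have hYp := DPair.toD hcl hpq hD hy hyp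
    have hpX := hXp.symm hcl hxp
    have hYX : DPair Φ y x := by
      have hroot : rt 1 y 1 p ∈ Φ := hYp.1
      exact (DPair.spread hcl (fun h => hxp h.symm) hpX U.one U.one hyp (Ne.symm hxy) hroot).1
    exact (hYX.symm hcl (Ne.symm hxy)).all hcl hxy hc hd

end Cor45

namespace Cor45
variable {n : ℕ} {Φ : Set (Fin n → ℝ)}

/-- The block of `i` contains a "D-configuration". -/
def DIn (Φ : Set (Fin n → ℝ)) (i : Fin n) : Prop :=
  ∃ p q, Con Φ i p ∧ Con Φ i q ∧ p ≠ q ∧ DPair Φ p q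

lemma norm_root (hcl : ∀ α ∈ Φ, ∀ β ∈ Φ, reflRoot α β ∈ Φ) {x y : Fin n} {a b : ℝ}
    (ha : U a) (hb : U b) (hxy : x ≠ y) (h : rt a x b y ∈ Φ) : rt 1 x (a*b) y ∈ Φ := by
  rcases ha with rfl | rfl
  · rw [one_mul]; exact h
  · have := neg_mem hcl U.negone hb hxy h
    norm_num at this
    rw [neg_one_mul]; exact this

lemma sign_unique (hcl : ∀ α ∈ Φ, ∀ β ∈ Φ, reflRoot α β ∈ Φ) {x y : Fin n} {a b c d : ℝ}
    (hA : ¬ DIn Φ x) (hxy : x ≠ y) (ha : U a) (hb : U b) (hc : U c) (hd : U d)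
    (h1 : rt a x b y ∈ Φ) (h2 : rt c x d y ∈ Φ) : a * b = c * d := by
  by_contra hne
  have k1 := norm_root hcl ha hb hxy h1
  have k2 := norm_root hcl hc hd hxy h2
  have hD : DPair Φ x y := by
    rcases ha.mul hb with h | h <;> rcases hc.mul hd with h' | h'
    · exact absurd (h.trans h'.symm) hne
    · exact ⟨by rwa [h] at k1, by rwa [h'] at k2⟩
    · exact ⟨by rwa [h'] at k2, by rwa [h] at k1⟩
    · exact absurd (h.trans h'.symm) hne
  exact hA ⟨x, y, Con.refl x, Or.inr ⟨hxy, a, b, ha, hb, h1⟩, hxy, hD⟩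

/-- Sign of the (unique, in an A-block) root class on a pair. -/
def sgn (Φ : Set (Fin n → ℝ)) (x y : Fin n) : ℝ :=
  @dite _ (∃ p : ℝ × ℝ, U p.1 ∧ U p.2 ∧ rt p.1 x p.2 y ∈ Φ) (Classical.dec _)
    (fun h => h.choose.1 * h.choose.2) (fun _ => 1)

lemma sgn_unit (x y : Fin n) : U (sgn Φ x y) := by
  rw [sgn]
  by_cases h : ∃ p : ℝ × ℝ, U p.1 ∧ U p.2 ∧ rt p.1 x p.2 y ∈ Φ
  · rw [dif_pos h]; exact (h.choose_spec.1).mul h.choose_spec.2.1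
  · rw [dif_neg h]; exact U.one

lemma sgn_spec (hcl : ∀ α ∈ Φ, ∀ β ∈ Φ, reflRoot α β ∈ Φ) {x y : Fin n} {a b : ℝ}
    (hA : ¬ DIn Φ x) (hxy : x ≠ y) (ha : U a) (hb : U b)
    (h : rt a x b y ∈ Φ) : sgn Φ x y = a * b := by
  have hex : ∃ p : ℝ × ℝ, U p.1 ∧ U p.2 ∧ rt p.1 x p.2 y ∈ Φ := ⟨(a, b), ha, hb, h⟩
  rw [sgn, dif_pos hex]
  exact sign_unique hcl hA hxy hex.choose_spec.1 hex.choose_spec.2.1 ha hb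
    hex.choose_spec.2.2 h

def blk (Φ : Set (Fin n → ℝ)) (i : Fin n) : Finset (Fin n) :=
  @Finset.filter _ (fun j => Con Φ i j) (Classical.decPred _) Finset.univ

lemma mem_blk {i j : Fin n} : j ∈ blk Φ i ↔ Con Φ i j := by
  classical
  simp [blk]

lemma blk_self (i : Fin n) : i ∈ blk Φ i := mem_blk.2 (Con.refl i)

lemma blk_eq (hcl : ∀ α ∈ Φ, ∀ β ∈ Φ, reflRoot α β ∈ Φ) {i j : Fin n}
    (h : j ∈ blk Φ i) : blk Φ j = blk Φ i := by
  have hij : Con Φ i j := mem_blk.1 h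
  ext m
  rw [mem_blk, mem_blk]
  exact ⟨fun h' => Con.trans hcl hij h', fun h' => Con.trans hcl hij.symm h'⟩

lemma DIn_transfer (hcl : ∀ α ∈ Φ, ∀ β ∈ Φ, reflRoot α β ∈ Φ) {i j : Fin n}
    (hij : Con Φ i j) : (DIn Φ j ↔ DIn Φ i) := by
  constructor <;> rintro ⟨p, q, hp, hq, hpq, hD⟩
  · exact ⟨p, q, Con.trans hcl hij hp, Con.trans hcl hij hq, hpq, hD⟩
  · exact ⟨p, q, Con.trans hcl hij.symm hp, Con.trans hcl hij.symm hq, hpq, hD⟩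

def rep (Φ : Set (Fin n → ℝ)) (i : Fin n) : Fin n :=
  (blk Φ i).min' ⟨i, blk_self i⟩

lemma rep_mem (i : Fin n) : rep Φ i ∈ blk Φ i := Finset.min'_mem _ _

end Cor45

namespace Cor45
variable {n : ℕ} {Φ : Set (Fin n → ℝ)}

def eps (Φ : Set (Fin n → ℝ)) (i : Fin n) : ℝ :=
  @dite _ (i = rep Φ i ∨ DIn Φ i) (Classical.dec _)
    (fun _ => 1) (fun _ => -sgn Φ (rep Φ i) i)

lemma eps_pos {i : Fin n} (h : i = rep Φ i ∨ DIn Φ i) : eps Φ i = 1 := by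
  rw [eps, dif_pos h]

lemma eps_neg {i : Fin n} (h : ¬(i = rep Φ i ∨ DIn Φ i)) :
    eps Φ i = -sgn Φ (rep Φ i) i := by
  rw [eps, dif_neg h]

lemma eps_unit (i : Fin n) : U (eps Φ i) := by
  by_cases h : i = rep Φ i ∨ DIn Φ i
  · rw [eps_pos h]; exact U.one
  · rw [eps_neg h]; exact (sgn_unit _ _).neg

lemma eps_sign (hcl : ∀ α ∈ Φ, ∀ β ∈ Φ, reflRoot α β ∈ Φ) {x y : Fin n} {a b : ℝ}
    (hA : ¬ DIn Φ x) (hxy : x ≠ y) (ha : U a) (hb : U b) (h : rt a x b y ∈ Φ) :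
    eps Φ x * eps Φ y = -(a * b) := by
  have hCxy : Con Φ x y := Or.inr ⟨hxy, a, b, ha, hb, h⟩
  have hAy : ¬ DIn Φ y := fun hd => hA ((DIn_transfer hcl hCxy).1 hd)
  have hrep : rep Φ y = rep Φ x := by
    have hB := blk_eq hcl (mem_blk.2 hCxy)
    unfold rep
    simp only [hB]
  set r := rep Φ x with hr
  have hCxr : Con Φ x r := mem_blk.1 (rep_mem x)
  have hAr : ¬ DIn Φ r := fun hd => hA ((DIn_transfer hcl hCxr).1 hd)
  by_cases hx : x = r
  · by_cases hy : y = r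
    · exact absurd (hx.trans hy.symm) hxy
    · have ex : eps Φ x = 1 := eps_pos (Or.inl hx)
      have ey : eps Φ y = -sgn Φ r y := by
        rw [eps_neg, hrep]
        rintro (h0 | h0)
        · exact hy (h0.trans hrep)
        · exact hAy h0
      have hs : sgn Φ r y = a * b := by
        rw [← hx]; exact sgn_spec hcl hA hxy ha hb h
      rw [ex, ey, hs]; ring
  · by_cases hy : y = r
    · have ey : eps Φ y = 1 := eps_pos (Or.inl (by rw [hrep]; exact hy))
      have ex : eps Φ x = -sgn Φ r x := eps_neg (by rintro (h0 | h0); exacts [hx h0, hA h0])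
      have hm2 : rt b y a x ∈ Φ := by rw [← rt_comm]; exact h
      have hs : sgn Φ r x = b * a := by
        rw [← hy]; exact sgn_spec hcl hAy hxy.symm hb ha hm2
      rw [ex, ey, hs]; ring
    · have ex : eps Φ x = -sgn Φ r x := eps_neg (by rintro (h0 | h0); exacts [hx h0, hA h0])
      have ey : eps Φ y = -sgn Φ r y := by
        rw [eps_neg, hrep]
        rintro (h0 | h0)
        · exact hy (h0.trans hrep)
        · exact hAy h0
      have hrx : r ≠ x := fun h0 => hx h0.symm
      have hry : r ≠ y := fun h0 => hy h0.symm
      rcases hCxr with heq | ⟨_, c, e, hc, he, hm⟩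
      · exact absurd heq hx
      have hm' : rt e r c x ∈ Φ := by rw [← rt_comm]; exact hm
      have hs1 : sgn Φ r x = e * c := sgn_spec hcl hAr hrx he hc hm'
      have hroot : rt (-(e*c*a)) r b y ∈ Φ := C1 hcl he hc ha hb hrx hxy hry hm' h
      have hs2 : sgn Φ r y = -(e*c*a) * b :=
        sgn_spec hcl hAr hry ((he.mul hc).mul ha).neg hb hroot
      rw [ex, ey, hs1, hs2]
      rcases he with rfl|rfl <;> rcases hc with rfl|rfl <;> ring

lemma pair_mem (hcl : ∀ α ∈ Φ, ∀ β ∈ Φ, reflRoot α β ∈ Φ) {x y : Fin n} {a b c d : ℝ}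
    (hxy : x ≠ y) (ha : U a) (hb : U b) (hc : U c) (hd : U d)
    (hprod : c * d = a * b) (h : rt a x b y ∈ Φ) : rt c x d y ∈ Φ := by
  have : (c = a ∧ d = b) ∨ (c = -a ∧ d = -b) := by
    rcases ha with rfl|rfl <;> rcases hb with rfl|rfl <;> rcases hc with rfl|rfl <;>
      rcases hd with rfl|rfl <;> revert hprod <;> norm_num
  rcases this with ⟨rfl, rfl⟩ | ⟨rfl, rfl⟩
  · exact h
  · exact neg_mem hcl ha hb hxy h

end Cor45

namespace Cor45
variable {n : ℕ} {Φ : Set (Fin n → ℝ)}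

lemma rt_sub (i j : Fin n) : rt (1:ℝ) i (-1) j = E i - E j := by
  simp [rt, sub_eq_add_neg]

lemma rt_add (i j : Fin n) : rt (1:ℝ) i 1 j = E i + E j := by
  simp [rt]

lemma rt_nadd (i j : Fin n) : rt (-1:ℝ) i (-1) j = -(E i + E j) := by
  simp [rt, neg_add]
  abel

lemma map_rt (ε : Fin n → ℝ) (a : ℝ) (x : Fin n) (b : ℝ) (y : Fin n) :
    (fun m => ε m * rt a x b y m) = rt (ε x * a) x (ε y * b) y := by
  funext m
  simp only [rt_apply]
  split_ifs <;> subst_vars <;> ring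

lemma rt_mem_PhiD {B : Finset (Fin n)} {x y : Fin n} (hx : x ∈ B) (hy : y ∈ B)
    (hxy : x ≠ y) {c d : ℝ} (hc : U c) (hd : U d) : rt c x d y ∈ PhiD B := by
  rcases hc with rfl|rfl <;> rcases hd with rfl|rfl
  · exact ⟨x, hx, y, hy, hxy, Or.inr (Or.inl (rt_add x y))⟩
  · exact ⟨x, hx, y, hy, hxy, Or.inl (rt_sub x y)⟩
  · refine ⟨y, hy, x, hx, hxy.symm, Or.inl ?_⟩
    rw [rt_comm, rt_sub]
  · exact ⟨x, hx, y, hy, hxy, Or.inr (Or.inr (rt_nadd x y))⟩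

lemma rt_mem_PhiA {B : Finset (Fin n)} {x y : Fin n} (hx : x ∈ B) (hy : y ∈ B)
    (hxy : x ≠ y) {c d : ℝ} (hc : U c) (hd : U d) (hcd : c * d = -1) :
    rt c x d y ∈ PhiA B := by
  rcases hc with rfl|rfl <;> rcases hd with rfl|rfl <;> norm_num at hcd
  · exact ⟨x, hx, y, hy, hxy, (rt_sub x y)⟩
  · refine ⟨y, hy, x, hx, hxy.symm, ?_⟩
    rw [rt_comm, rt_sub]

end Cor45


/-- Classification of root subsystems (Corollary 4.5). -/
theorem stmt10 (n : ℕ) (hn : 1 ≤ n) (Φ : Set (Fin n → ℝ)) (hsub : Φ ⊆ Dset n)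
    (hcl : ∀ α ∈ Φ, ∀ β ∈ Φ, reflRoot α β ∈ Φ) :
    ∃ (ε : Fin n → ℝ) (blk : Fin n → Finset (Fin n)) (t : Finset (Fin n) → RType),
      (∀ i, ε i = 1 ∨ ε i = -1) ∧
      (∀ i, i ∈ blk i) ∧ (∀ i j, j ∈ blk i → blk j = blk i) ∧
      (∀ i, t (blk i) = RType.A ∨ t (blk i) = RType.D) ∧
      (fun v : Fin n → ℝ => fun j => ε j * v j) '' Φ =
        ⋃ i, PhiOf (t (blk i)) (blk i) := by
  classical
  open Cor45 in
  refine ⟨eps Φ, blk Φ,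
    fun B => if (∃ p ∈ B, ∃ q ∈ B, p ≠ q ∧ DPair Φ p q) then RType.D else RType.A,
    fun i => eps_unit i, fun i => blk_self i, fun i j h => blk_eq hcl h, ?_, ?_⟩
  · intro i
    by_cases h : ∃ p ∈ blk Φ i, ∃ q ∈ blk Φ i, p ≠ q ∧ DPair Φ p q
    · exact Or.inr (if_pos h)
    · exact Or.inl (if_neg h)
  · have tcond : ∀ i : Fin n,
        (∃ p ∈ blk Φ i, ∃ q ∈ blk Φ i, p ≠ q ∧ DPair Φ p q) ↔ DIn Φ i := by
      intro i
      constructor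
      · rintro ⟨p, hp, q, hq, hpq, hD⟩
        exact ⟨p, q, mem_blk.1 hp, mem_blk.1 hq, hpq, hD⟩
      · rintro ⟨p, q, hp, hq, hpq, hD⟩
        exact ⟨p, mem_blk.2 hp, q, mem_blk.2 hq, hpq, hD⟩
    ext β
    simp only [Set.mem_image, Set.mem_iUnion]
    constructor
    · rintro ⟨α, hα, rfl⟩
      have shape : ∃ x y a b, x ≠ y ∧ U a ∧ U b ∧ α = rt a x b y := by
        rcases hsub hα with ⟨x, y, hxy, h | h | h⟩
        · exact ⟨x, y, 1, -1, hxy, U.one, U.negone, by rw [h, rt_sub]⟩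
        · exact ⟨x, y, 1, 1, hxy, U.one, U.one, by rw [h, rt_add]⟩
        · exact ⟨x, y, -1, -1, hxy, U.negone, U.negone, by rw [h, rt_nadd]⟩
      obtain ⟨x, y, a, b, hxy, ha, hb, rfl⟩ := shape
      refine ⟨x, ?_⟩
      rw [map_rt]
      have hyb : y ∈ blk Φ x := mem_blk.2 (Or.inr ⟨hxy, a, b, ha, hb, hα⟩)
      by_cases hD : DIn Φ x
      · simp only [if_pos ((tcond x).mpr hD)]
        exact rt_mem_PhiD (blk_self x) hyb hxy ((eps_unit x).mul ha) ((eps_unit y).mul hb)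
      · simp only [if_neg (fun h => hD ((tcond x).mp h))]
        have hsign := eps_sign hcl hD hxy ha hb hα
        refine rt_mem_PhiA (blk_self x) hyb hxy ((eps_unit x).mul ha) ((eps_unit y).mul hb) ?_
        have : eps Φ x * a * (eps Φ y * b) = (eps Φ x * eps Φ y) * (a * b) := by ring
        rw [this, hsign]
        rcases ha.mul hb with h | h <;> rw [h] <;> norm_num
    · rintro ⟨i, hβ⟩
      by_cases hD : DIn Φ i
      · simp only [if_pos ((tcond i).mpr hD)] at hβ
        obtain ⟨x, hx, y, hy, hxy, hf⟩ := hβ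
        obtain ⟨p, q, hp, hq, hpq, hDp⟩ := hD
        have hpx : Con Φ p x := Cor45.Con.trans hcl hp.symm (mem_blk.1 hx)
        have hpy : Con Φ p y := Cor45.Con.trans hcl hp.symm (mem_blk.1 hy)
        have hall : ∀ c d : ℝ, U c → U d → rt c x d y ∈ Φ :=
          fun c d hc hd => DPair.full hcl hpq hDp hpx hpy hxy hc hd
        have hβrt : ∃ a b : ℝ, U a ∧ U b ∧ β = rt a x b y := by
          rcases hf with h | h | h
          · exact ⟨1, -1, U.one, U.negone, by rw [h, rt_sub]⟩
          · exact ⟨1, 1, U.one, U.one, by rw [h, rt_add]⟩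
          · exact ⟨-1, -1, U.negone, U.negone, by rw [h, rt_nadd]⟩
        obtain ⟨a, b, ha, hb, rfl⟩ := hβrt
        refine ⟨rt (eps Φ x * a) x (eps Φ y * b) y,
          hall _ _ ((eps_unit x).mul ha) ((eps_unit y).mul hb), ?_⟩
        rw [map_rt]
        have e1 : eps Φ x * (eps Φ x * a) = a := by
          rcases eps_unit (Φ := Φ) x with h | h <;> rw [h] <;> ring
        have e2 : eps Φ y * (eps Φ y * b) = b := by
          rcases eps_unit (Φ := Φ) y with h | h <;> rw [h] <;> ring
        rw [e1, e2]
      · simp only [if_neg (fun h => hD ((tcond i).mp h))] at hβ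
        obtain ⟨x, hx, y, hy, hxy, hf⟩ := hβ
        have hCxy : Con Φ x y := Cor45.Con.trans hcl (mem_blk.1 hx).symm (mem_blk.1 hy)
        rcases hCxy with heq | ⟨_, a, b, ha, hb, hm⟩
        · exact absurd heq hxy
        have hAx : ¬ DIn Φ x := fun h => hD ((DIn_transfer hcl (mem_blk.1 hx)).1 h)
        have hsign : eps Φ x * eps Φ y = -(a * b) := eps_sign hcl hAx hxy ha hb hm
        have hux := eps_unit (Φ := Φ) x
        have huy := eps_unit (Φ := Φ) y
        have hmem : rt (eps Φ x) x (-(eps Φ y)) y ∈ Φ := by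
          refine pair_mem hcl hxy ha hb hux huy.neg ?_ hm
          rw [mul_neg, hsign]; ring
        refine ⟨rt (eps Φ x) x (-(eps Φ y)) y, hmem, ?_⟩
        rw [map_rt]
        have e1 : eps Φ x * eps Φ x = 1 := by rcases hux with h | h <;> rw [h] <;> ring
        have e2 : eps Φ y * -(eps Φ y) = -1 := by rcases huy with h | h <;> rw [h] <;> ring
        rw [e1, e2, rt_sub, hf]
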